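/- Fix 0 ≤ α2 ≤ α1 ≤ 1 and ε > 0 such that 1 − α1 − ε > 0. For all sufficiently large n (such that the indicated quantities are integers), there exists a binary matrix H over GF(2) with n columns, formed by stacking a matrix H1 with n(1−α1−ε) rows on top of a matrix H2 with n(α1−α2) rows, such that: (i) H has full row rank; (ii) for every subset Γ ⊆ {1,…,n} with |Γ| = n(1−α2), the dimension of the GF(2)-span of the columns of H indexed by Γ is at least n(1−α2−ε) − 3/ε; and (iii) for every subset Γ ⊆ {1,…,n} with |Γ| = n(1−α1), the dimension of the GF(2)-span of the columns of H1 indexed by Γ is at least n(1−α1−ε) − 3/ε. -/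

import Mathlib

noncomputable section

/-- The dimension of the `GF(2)`-span of the columns (indexed by `Γ`) of a matrix. -/
def colSpanDim {k : Type*} {n : ℕ} (H : Matrix k (Fin n) (ZMod 2)) (Γ : Finset (Fin n)) : ℕ :=
  Module.finrank (ZMod 2) (Submodule.span (ZMod 2) (H.transpose '' ↑Γ))

open Matrix
set_option maxHeartbeats 2000000

namespace Stmt16

open Matrix Module Finset

local notation "F" => ZMod 2

/-- Extraction: if the column span over `Γ` is small, there is a large linearly
independent family orthogonal to all columns in `Γ`. -/
lemma exists_indep_orthogonal {κ : Type*} [Fintype κ] [DecidableEq κ] {n : ℕ}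
    (B : Matrix κ (Fin n) F) (Γ : Finset (Fin n)) (t : ℕ)
    (h : colSpanDim B Γ + t ≤ Fintype.card κ) :
    ∃ v : Fin t → (κ → F), LinearIndependent F v ∧
      ∀ j ∈ Γ, ∀ i, v i ⬝ᵥ (fun x => B x j) = 0 := by
  classical
  set A : Matrix {j // j ∈ Γ} κ F := Matrix.of (fun j x => B x j.1) with hA
  have hset : Set.range (A : {j // j ∈ Γ} → κ → F) = B.transpose '' ↑Γ := by
    ext c
    constructor
    · rintro ⟨⟨j, hj⟩, rfl⟩; exact ⟨j, hj, rfl⟩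
    · rintro ⟨j, hj, rfl⟩; exact ⟨⟨j, hj⟩, rfl⟩
  have hrank : A.rank = colSpanDim B Γ := by
    rw [← Matrix.rank_transpose, Matrix.rank, Matrix.range_mulVecLin]
    change finrank F (Submodule.span F (Set.range (A : {j // j ∈ Γ} → κ → F))) = _
    rw [hset]
    rfl
  have hker : t ≤ finrank F (LinearMap.ker A.mulVecLin) := by
    have h1 := LinearMap.finrank_range_add_finrank_ker A.mulVecLin
    rw [Module.finrank_pi] at h1
    have h2 : A.rank = finrank F (LinearMap.range A.mulVecLin) := rfl
    omega
  obtain ⟨f, hf⟩ := exists_linearIndependent_of_le_finrank hker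
  refine ⟨fun i => (f i : κ → F), ?_, ?_⟩
  · exact hf.map' (LinearMap.ker A.mulVecLin).subtype (Submodule.ker_subtype _)
  · intro j hj i
    have hm := (f i).2
    rw [LinearMap.mem_ker] at hm
    have h0 := congr_fun hm ⟨j, hj⟩
    have h1 : ∑ x, B x j * (f i : κ → F) x = 0 := by
      simp only [Matrix.mulVecLin_apply, Matrix.mulVec, dotProduct, hA, Matrix.of_apply,
        Pi.zero_apply] at h0
      exact h0
    calc (fun i => (f i : κ → F)) i ⬝ᵥ (fun x => B x j)
        = ∑ x, B x j * (f i : κ → F) x := by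
          simp [dotProduct, mul_comm]
      _ = 0 := h1

/-- The pairing map with a family of vectors. -/
def pairL {κ : Type*} [Fintype κ] {t : ℕ} (v : Fin t → (κ → F)) :
    (κ → F) →ₗ[F] (Fin t → F) where
  toFun c := fun i => v i ⬝ᵥ c
  map_add' c d := by
    funext i
    simp [dotProduct, mul_add, Finset.sum_add_distrib]
  map_smul' a c := by
    funext i
    simp [dotProduct, Finset.mul_sum, mul_left_comm]

lemma pairL_surjective {κ : Type*} [Fintype κ] [DecidableEq κ] {t : ℕ}
    {v : Fin t → (κ → F)} (hv : LinearIndependent F v) :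
    Function.Surjective (pairL v) := by
  classical
  set V : Matrix (Fin t) κ F := Matrix.of v with hV
  have hpair : pairL v = V.mulVecLin := by
    ext c i
    simp [pairL, hV, Matrix.mulVecLin_apply, Matrix.mulVec, dotProduct]
  have hr : finrank F (LinearMap.range V.mulVecLin) = t := by
    have h1 : V.rank = Vᵀ.rank := (Matrix.rank_transpose V).symm
    have h2 : Vᵀ.rank = finrank F (Submodule.span F (Set.range v)) := by
      rw [Matrix.rank, Matrix.range_mulVecLin]
      rfl
    have h3 : finrank F (Submodule.span F (Set.range v)) = t := by
      rw [finrank_span_eq_card hv, Fintype.card_fin]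
    have h4 : V.rank = finrank F (LinearMap.range V.mulVecLin) := rfl
    omega
  rw [hpair, ← LinearMap.range_eq_top]
  exact Submodule.eq_top_of_finrank_eq
    (by rw [hr, Module.finrank_pi, Fintype.card_fin])

lemma card_orthogonal {κ : Type*} [Fintype κ] [DecidableEq κ] {t : ℕ}
    (L : (κ → F) →ₗ[F] (Fin t → F)) (hL : Function.Surjective L) :
    (Finset.univ.filter fun c : κ → F => ∀ i, L c i = 0).card
      = 2 ^ (Fintype.card κ - t) := by
  classical
  have h1 : (Finset.univ.filter fun c : κ → F => ∀ i, L c i = 0).card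
      = Fintype.card {c : κ → F // ∀ i, L c i = 0} := (Fintype.card_subtype _).symm
  have e : {c : κ → F // ∀ i, L c i = 0} ≃ LinearMap.ker L :=
    Equiv.subtypeEquivRight fun c => by
      simp [LinearMap.mem_ker, funext_iff]
  have h2 : Fintype.card {c : κ → F // ∀ i, L c i = 0}
      = Fintype.card (LinearMap.ker L) := Fintype.card_congr e
  have h3 : Fintype.card (LinearMap.ker L) = 2 ^ finrank F (LinearMap.ker L) := by
    have := card_eq_pow_finrank (K := F) (V := LinearMap.ker L)
    simpa [ZMod.card] using this
  have h4 : finrank F (LinearMap.ker L) = Fintype.card κ - t := by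
    have h5 := LinearMap.finrank_range_add_finrank_ker L
    rw [LinearMap.range_eq_top.mpr hL, finrank_top, Module.finrank_pi, Module.finrank_pi,
      Fintype.card_fin] at h5
    omega
  rw [h1, h2, h3, h4]

lemma card_constraint {n : ℕ} {C : Type*} [Fintype C] [DecidableEq C]
    (Γ : Finset (Fin n)) (K : Finset C) :
    (Fintype.piFinset fun j : Fin n => if j ∈ Γ then K else Finset.univ).card
      = K.card ^ Γ.card * (Fintype.card C) ^ (n - Γ.card) := by
  classical
  rw [Fintype.card_piFinset]
  rw [← Finset.prod_mul_prod_compl Γ]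
  have h1 : ∏ j ∈ Γ, (if j ∈ Γ then K else Finset.univ).card = K.card ^ Γ.card := by
    rw [Finset.prod_congr rfl (fun j hj => by rw [if_pos hj]), Finset.prod_const]
  have h2 : ∏ j ∈ Γᶜ, (if j ∈ Γ then K else Finset.univ).card
      = (Fintype.card C) ^ (n - Γ.card) := by
    rw [Finset.prod_congr rfl (fun j hj => by
      rw [if_neg (Finset.mem_compl.mp hj), Finset.card_univ]), Finset.prod_const,
      Finset.card_compl, Fintype.card_fin]
  rw [h1, h2]

lemma card_exists_le {α β : Type*} [Fintype α] [Fintype β] [DecidableEq α]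
    (p : α → Prop) [DecidablePred p] (Q : β → Prop) (S : β → Finset α) (M : ℕ)
    (h : ∀ a, p a → ∃ b, Q b ∧ a ∈ S b) (hS : ∀ b, Q b → (S b).card ≤ M) :
    (Finset.univ.filter p).card ≤ Fintype.card β * M := by
  classical
  calc (Finset.univ.filter p).card
      ≤ (Finset.univ.biUnion fun b => if Q b then S b else ∅).card := by
        apply Finset.card_le_card
        intro a ha
        obtain ⟨b, hQ, hmem⟩ := h a (Finset.mem_filter.mp ha).2
        exact Finset.mem_biUnion.mpr ⟨b, Finset.mem_univ _, by rw [if_pos hQ]; exact hmem⟩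
    _ ≤ ∑ b : β, (if Q b then S b else ∅).card := Finset.card_biUnion_le
    _ ≤ ∑ _b : β, M := Finset.sum_le_sum fun b _ => by
        split
        · exact hS b ‹_›
        · simp
    _ = Fintype.card β * M := by rw [Finset.sum_const, Finset.card_univ, smul_eq_mul]

open Classical in
lemma card_bad_le {n : ℕ} {κ κ' : Type*} [Fintype κ] [Fintype κ'] [DecidableEq κ]
    [DecidableEq κ'] (π : (κ → F) →ₗ[F] (κ' → F)) (hπ : Function.Surjective π)
    (t : ℕ) (Γ : Finset (Fin n)) :
    (Finset.univ.filter fun G : Fin n → (κ → F) =>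
        ∃ v : Fin t → (κ' → F), LinearIndependent F v ∧
          ∀ j ∈ Γ, ∀ i, v i ⬝ᵥ π (G j) = 0).card
      ≤ 2 ^ (Fintype.card κ' * t + (Fintype.card κ - t) * Γ.card
          + Fintype.card κ * (n - Γ.card)) := by
  classical
  have key : ∀ v : Fin t → (κ' → F), LinearIndependent F v →
      (Fintype.piFinset fun j : Fin n => if j ∈ Γ then
          (Finset.univ.filter fun c : κ → F => ∀ i, ((pairL v).comp π) c i = 0)
        else Finset.univ).card
      = 2 ^ ((Fintype.card κ - t) * Γ.card) * 2 ^ (Fintype.card κ * (n - Γ.card)) := by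
    intro v hv
    rw [card_constraint, card_orthogonal ((pairL v).comp π)
      (by rw [LinearMap.coe_comp]; exact (pairL_surjective hv).comp hπ)]
    have hc : Fintype.card (κ → F) = 2 ^ Fintype.card κ := by
      simp [Fintype.card_fun, ZMod.card]
    rw [hc, ← pow_mul, ← pow_mul]
  calc (Finset.univ.filter fun G : Fin n → (κ → F) =>
        ∃ v : Fin t → (κ' → F), LinearIndependent F v ∧
          ∀ j ∈ Γ, ∀ i, v i ⬝ᵥ π (G j) = 0).card
      ≤ Fintype.card (Fin t → (κ' → F))
          * (2 ^ ((Fintype.card κ - t) * Γ.card) * 2 ^ (Fintype.card κ * (n - Γ.card))) := by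
        apply card_exists_le _ (fun v => LinearIndependent F v)
          (fun v => Fintype.piFinset fun j : Fin n => if j ∈ Γ then
            (Finset.univ.filter fun c : κ → F => ∀ i, ((pairL v).comp π) c i = 0)
          else Finset.univ)
        · intro G hG
          obtain ⟨v, hv, hortho⟩ := hG
          refine ⟨v, hv, ?_⟩
          rw [Fintype.mem_piFinset]
          intro j
          by_cases hj : j ∈ Γ
          · rw [if_pos hj]
            exact Finset.mem_filter.mpr ⟨Finset.mem_univ _, fun i => hortho j hj i⟩
          · rw [if_neg hj]; exact Finset.mem_univ _
        · intro v hv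
          rw [key v hv]
    _ = 2 ^ (Fintype.card κ' * t + (Fintype.card κ - t) * Γ.card
          + Fintype.card κ * (n - Γ.card)) := by
        have hcard : Fintype.card (Fin t → κ' → F) = 2 ^ (Fintype.card κ' * t) := by
          rw [pow_mul]
          simp [Fintype.card_fun, ZMod.card]
        rw [hcard, pow_add, pow_add]
        ring

end Stmt16

/-- for `0 ≤ α₂ ≤ α₁ ≤ 1` and `ε > 0` with `1 − α₁ − ε > 0`, for all
sufficiently large `n` making the indicated quantities integers, there exist binary
matrices `H₁` (with `n(1−α₁−ε)` rows) and `H₂` (with `n(α₁−α₂)` rows) whose vertical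
stack `H` has full row rank, every `n(1−α₂)` columns of `H` span a subspace of dimension
at least `n(1−α₂−ε) − 3/ε`, and every `n(1−α₁)` columns of `H₁` span a subspace of
dimension at least `n(1−α₁−ε) − 3/ε`. -/
theorem stmt16_exists_good_two_level_coset_matrix (α₁ α₂ ε : ℝ)
    (hα₂ : 0 ≤ α₂) (hα₂₁ : α₂ ≤ α₁) (hα₁ : α₁ ≤ 1) (hε : 0 < ε)
    (hpos : 0 < 1 - α₁ - ε) :
    ∃ N : ℕ, ∀ n ≥ N, ∀ k₁ k₂ r₁ r₂ : ℕ,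
      (k₁ : ℝ) = n * (1 - α₁ - ε) → (k₂ : ℝ) = n * (α₁ - α₂) →
      (r₁ : ℝ) = n * (1 - α₁) → (r₂ : ℝ) = n * (1 - α₂) →
      ∃ (H₁ : Matrix (Fin k₁) (Fin n) (ZMod 2)) (H₂ : Matrix (Fin k₂) (Fin n) (ZMod 2)),
        (Matrix.fromRows H₁ H₂).rank = k₁ + k₂ ∧
        (∀ Γ : Finset (Fin n), Γ.card = r₂ →
          (n : ℝ) * (1 - α₂ - ε) - 3 / ε ≤ colSpanDim (Matrix.fromRows H₁ H₂) Γ) ∧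
        (∀ Γ : Finset (Fin n), Γ.card = r₁ →
          (n : ℝ) * (1 - α₁ - ε) - 3 / ε ≤ colSpanDim H₁ Γ) := by
  classical
  obtain ⟨t, htdef⟩ : ∃ t : ℕ, t = ⌈1/ε⌉₊ + 1 := ⟨_, rfl⟩
  have hε1 : ε < 1 := by nlinarith
  have htlb : (1:ℝ)/ε + 1 ≤ (t : ℝ) := by
    have := Nat.le_ceil (1/ε)
    rw [htdef]
    push_cast
    linarith
  have htub : (t : ℝ) ≤ 3/ε + 1 := by
    have h1 : (⌈1/ε⌉₊ : ℝ) < 1/ε + 1 := Nat.ceil_lt_add_one (by positivity)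
    have h2 : (1:ℝ) ≤ 2/ε := by
      rw [le_div_iff₀ hε]; linarith
    have h3 : (1:ℝ)/ε + 2/ε = 3/ε := by ring
    rw [htdef]
    push_cast
    linarith
  refine ⟨⌈2/ε⌉₊ + ⌈(t:ℝ)/(1-α₁-ε)⌉₊ + 1, ?_⟩
  intro n hn k₁ k₂ r₁ r₂ hk₁ hk₂ hr₁ hr₂
  have hnn : (0:ℝ) ≤ n := Nat.cast_nonneg n
  have hn2 : (2:ℝ)/ε ≤ n := by
    refine le_trans (Nat.le_ceil _) ?_
    exact_mod_cast Nat.le_of_lt (by omega : ⌈(2:ℝ)/ε⌉₊ < n)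
  have hnt : (t:ℝ)/(1-α₁-ε) ≤ n := by
    refine le_trans (Nat.le_ceil _) ?_
    exact_mod_cast Nat.le_of_lt (by omega : ⌈(t:ℝ)/(1-α₁-ε)⌉₊ < n)
  have hnε2 : (2:ℝ) ≤ n * ε := by
    rw [div_le_iff₀ hε] at hn2; linarith
  have htk₁R : (t:ℝ) ≤ k₁ := by
    rw [div_le_iff₀ hpos] at hnt
    rw [hk₁]; linarith
  have htk₁ : t ≤ k₁ := by exact_mod_cast htk₁R
  have ht1 : 1 ≤ t := by omega
  have htk : t ≤ k₁ + k₂ := by omega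
  have h1k : 1 ≤ k₁ + k₂ := by omega
  have hkR : ((k₁:ℝ) + k₂) = n * (1 - α₂ - ε) := by rw [hk₁, hk₂]; ring
  have hknR : ((k₁:ℝ) + k₂) + 2 ≤ n := by nlinarith
  have hkn : (k₁ + k₂) + 2 ≤ n := by exact_mod_cast (by push_cast; linarith : ((k₁+k₂:ℕ):ℝ) + 2 ≤ n)
  have hr₂n : r₂ ≤ n := by
    have : (r₂:ℝ) ≤ n := by rw [hr₂]; nlinarith
    exact_mod_cast this
  have hr₁n : r₁ ≤ n := by
    have : (r₁:ℝ) ≤ n := by rw [hr₁]; nlinarith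
    exact_mod_cast this
  have hm₂ : (r₂:ℝ) - ((k₁:ℝ) + k₂) = n * ε := by rw [hr₂, hkR]; ring
  have hm₁ : (r₁:ℝ) - (k₁:ℝ) = n * ε := by rw [hr₁, hk₁]; ring
  have htm : (n:ℝ) + 2 ≤ (t:ℝ) * (n * ε) := by
    have h0 : (1/ε) * (n * ε) = n := by field_simp
    have h1 : ((1:ℝ)/ε + 1) * (n * ε) ≤ (t:ℝ) * (n * ε) := by
      apply mul_le_mul_of_nonneg_right htlb
      positivity
    have h2 : ((1:ℝ)/ε + 1) * (n * ε) = n + n * ε := by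
      rw [add_mul, one_mul, h0]
    linarith
  -- the column type and bad sets
  have hcardκ : Fintype.card (Fin k₁ ⊕ Fin k₂) = k₁ + k₂ := by simp
  have hidsurj : Function.Surjective
      (⇑(LinearMap.id : ((Fin k₁ ⊕ Fin k₂) → ZMod 2) →ₗ[ZMod 2] ((Fin k₁ ⊕ Fin k₂) → ZMod 2))) :=
    fun x => ⟨x, rfl⟩
  have hπ₁surj : Function.Surjective
      (⇑(LinearMap.funLeft (ZMod 2) (ZMod 2) (Sum.inl : Fin k₁ → Fin k₁ ⊕ Fin k₂))) :=
    LinearMap.funLeft_surjective_of_injective _ _ _ Sum.inl_injective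
  set BadA : Finset (Fin n → ((Fin k₁ ⊕ Fin k₂) → ZMod 2)) :=
    Finset.univ.filter fun G => ∃ v : Fin 1 → ((Fin k₁ ⊕ Fin k₂) → ZMod 2),
      LinearIndependent (ZMod 2) v ∧ ∀ j ∈ (Finset.univ : Finset (Fin n)), ∀ i,
        v i ⬝ᵥ (LinearMap.id : _ →ₗ[ZMod 2] _) (G j) = 0 with hBadA
  set BadB : Finset (Fin n → ((Fin k₁ ⊕ Fin k₂) → ZMod 2)) :=
    Finset.univ.filter fun G => ∃ Γ : Finset (Fin n), Γ.card = r₂ ∧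
      G ∈ (Finset.univ.filter fun G' => ∃ v : Fin t → ((Fin k₁ ⊕ Fin k₂) → ZMod 2),
        LinearIndependent (ZMod 2) v ∧ ∀ j ∈ Γ, ∀ i,
          v i ⬝ᵥ (LinearMap.id : _ →ₗ[ZMod 2] _) (G' j) = 0) with hBadB
  set BadC : Finset (Fin n → ((Fin k₁ ⊕ Fin k₂) → ZMod 2)) :=
    Finset.univ.filter fun G => ∃ Γ : Finset (Fin n), Γ.card = r₁ ∧
      G ∈ (Finset.univ.filter fun G' => ∃ v : Fin t → (Fin k₁ → ZMod 2),
        LinearIndependent (ZMod 2) v ∧ ∀ j ∈ Γ, ∀ i,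
          v i ⬝ᵥ (LinearMap.funLeft (ZMod 2) (ZMod 2) Sum.inl) (G' j) = 0) with hBadC
  -- cardinality bounds
  have hA : BadA.card ≤ 2 ^ ((k₁ + k₂) * 1 + ((k₁ + k₂) - 1) * n + (k₁ + k₂) * (n - n)) := by
    have h := Stmt16.card_bad_le (n := n) (LinearMap.id) hidsurj 1 (Finset.univ : Finset (Fin n))
    rw [hcardκ, Finset.card_univ, Fintype.card_fin] at h
    rw [hBadA]
    exact h
  have hB : BadB.card ≤ 2 ^ n *
      2 ^ ((k₁ + k₂) * t + ((k₁ + k₂) - t) * r₂ + (k₁ + k₂) * (n - r₂)) := by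
    rw [hBadB]
    have := Stmt16.card_exists_le
      (fun G : Fin n → ((Fin k₁ ⊕ Fin k₂) → ZMod 2) => ∃ Γ : Finset (Fin n), Γ.card = r₂ ∧
        G ∈ (Finset.univ.filter fun G' => ∃ v : Fin t → ((Fin k₁ ⊕ Fin k₂) → ZMod 2),
          LinearIndependent (ZMod 2) v ∧ ∀ j ∈ Γ, ∀ i,
            v i ⬝ᵥ (LinearMap.id : _ →ₗ[ZMod 2] _) (G' j) = 0))
      (fun Γ : Finset (Fin n) => Γ.card = r₂)
      (fun Γ => Finset.univ.filter fun G' => ∃ v : Fin t → ((Fin k₁ ⊕ Fin k₂) → ZMod 2),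
        LinearIndependent (ZMod 2) v ∧ ∀ j ∈ Γ, ∀ i,
          v i ⬝ᵥ (LinearMap.id : _ →ₗ[ZMod 2] _) (G' j) = 0)
      (2 ^ ((k₁ + k₂) * t + ((k₁ + k₂) - t) * r₂ + (k₁ + k₂) * (n - r₂)))
      (fun a ha => ha)
      (fun Γ hΓ => by
        have h := Stmt16.card_bad_le (n := n) (LinearMap.id) hidsurj t Γ
        rw [hcardκ, hΓ] at h
        exact h)
    rw [Fintype.card_finset, Fintype.card_fin] at this
    exact this
  have hC : BadC.card ≤ 2 ^ n *
      2 ^ (k₁ * t + ((k₁ + k₂) - t) * r₁ + (k₁ + k₂) * (n - r₁)) := by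
    rw [hBadC]
    have := Stmt16.card_exists_le
      (fun G : Fin n → ((Fin k₁ ⊕ Fin k₂) → ZMod 2) => ∃ Γ : Finset (Fin n), Γ.card = r₁ ∧
        G ∈ (Finset.univ.filter fun G' => ∃ v : Fin t → (Fin k₁ → ZMod 2),
          LinearIndependent (ZMod 2) v ∧ ∀ j ∈ Γ, ∀ i,
            v i ⬝ᵥ (LinearMap.funLeft (ZMod 2) (ZMod 2) Sum.inl) (G' j) = 0))
      (fun Γ : Finset (Fin n) => Γ.card = r₁)
      (fun Γ => Finset.univ.filter fun G' => ∃ v : Fin t → (Fin k₁ → ZMod 2),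
        LinearIndependent (ZMod 2) v ∧ ∀ j ∈ Γ, ∀ i,
          v i ⬝ᵥ (LinearMap.funLeft (ZMod 2) (ZMod 2) Sum.inl) (G' j) = 0)
      (2 ^ (k₁ * t + ((k₁ + k₂) - t) * r₁ + (k₁ + k₂) * (n - r₁)))
      (fun a ha => ha)
      (fun Γ hΓ => by
        have h := Stmt16.card_bad_le (n := n)
          (LinearMap.funLeft (ZMod 2) (ZMod 2) (Sum.inl : Fin k₁ → Fin k₁ ⊕ Fin k₂))
          hπ₁surj t Γ
        rw [hcardκ, hΓ, Fintype.card_fin] at h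
        exact h)
    rw [Fintype.card_finset, Fintype.card_fin] at this
    exact this
  -- exponent comparisons
  have hExpA : ((k₁ + k₂) * 1 + ((k₁ + k₂) - 1) * n + (k₁ + k₂) * (n - n)) + 2 ≤ (k₁ + k₂) * n := by
    rw [← Nat.cast_le (α := ℝ)]
    push_cast [Nat.cast_sub h1k, Nat.sub_self]
    nlinarith
  have hExpB : n + ((k₁ + k₂) * t + ((k₁ + k₂) - t) * r₂ + (k₁ + k₂) * (n - r₂)) + 2
      ≤ (k₁ + k₂) * n := by
    rw [← Nat.cast_le (α := ℝ)]
    push_cast [Nat.cast_sub htk, Nat.cast_sub hr₂n]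
    have hexp : (t:ℝ) * (r₂:ℝ) = (t:ℝ) * ((k₁:ℝ)+k₂) + (t:ℝ) * (n*ε) := by
      rw [show (r₂:ℝ) = ((k₁:ℝ)+k₂) + n*ε from by linarith]; ring
    nlinarith
  have hExpC : n + (k₁ * t + ((k₁ + k₂) - t) * r₁ + (k₁ + k₂) * (n - r₁)) + 2
      ≤ (k₁ + k₂) * n := by
    rw [← Nat.cast_le (α := ℝ)]
    push_cast [Nat.cast_sub htk, Nat.cast_sub hr₁n]
    have hexp : (t:ℝ) * (r₁:ℝ) = (t:ℝ) * (k₁:ℝ) + (t:ℝ) * (n*ε) := by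
      rw [show (r₁:ℝ) = (k₁:ℝ) + n*ε from by linarith]; ring
    nlinarith
  -- existence of a good G
  have hcardall : Fintype.card (Fin n → ((Fin k₁ ⊕ Fin k₂) → ZMod 2)) = 2 ^ ((k₁ + k₂) * n) := by
    rw [pow_mul]
    simp [Fintype.card_fun, ZMod.card, hcardκ]
  have h4A : 4 * BadA.card ≤ 2 ^ ((k₁ + k₂) * n) := by
    calc 4 * BadA.card ≤ 4 * 2 ^ ((k₁ + k₂) * 1 + ((k₁ + k₂) - 1) * n + (k₁ + k₂) * (n - n)) :=
          Nat.mul_le_mul_left _ hA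
      _ = 2 ^ (((k₁ + k₂) * 1 + ((k₁ + k₂) - 1) * n + (k₁ + k₂) * (n - n)) + 2) := by ring
      _ ≤ 2 ^ ((k₁ + k₂) * n) := Nat.pow_le_pow_right (by norm_num) hExpA
  have h4B : 4 * BadB.card ≤ 2 ^ ((k₁ + k₂) * n) := by
    calc 4 * BadB.card
        ≤ 4 * (2 ^ n * 2 ^ ((k₁ + k₂) * t + ((k₁ + k₂) - t) * r₂ + (k₁ + k₂) * (n - r₂))) :=
          Nat.mul_le_mul_left _ hB
      _ = 2 ^ (n + ((k₁ + k₂) * t + ((k₁ + k₂) - t) * r₂ + (k₁ + k₂) * (n - r₂)) + 2) := by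
          rw [pow_add, pow_add]; ring
      _ ≤ 2 ^ ((k₁ + k₂) * n) := Nat.pow_le_pow_right (by norm_num) hExpB
  have h4C : 4 * BadC.card ≤ 2 ^ ((k₁ + k₂) * n) := by
    calc 4 * BadC.card
        ≤ 4 * (2 ^ n * 2 ^ (k₁ * t + ((k₁ + k₂) - t) * r₁ + (k₁ + k₂) * (n - r₁))) :=
          Nat.mul_le_mul_left _ hC
      _ = 2 ^ (n + (k₁ * t + ((k₁ + k₂) - t) * r₁ + (k₁ + k₂) * (n - r₁)) + 2) := by
          rw [pow_add, pow_add]; ring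
      _ ≤ 2 ^ ((k₁ + k₂) * n) := Nat.pow_le_pow_right (by norm_num) hExpC
  have hex : ∃ G : Fin n → ((Fin k₁ ⊕ Fin k₂) → ZMod 2),
      G ∉ BadA ∧ G ∉ BadB ∧ G ∉ BadC := by
    by_contra hcon
    push_neg at hcon
    have hsub : (Finset.univ : Finset (Fin n → ((Fin k₁ ⊕ Fin k₂) → ZMod 2)))
        ⊆ BadA ∪ BadB ∪ BadC := by
      intro G _
      rcases Classical.em (G ∈ BadA) with h | h
      · exact Finset.mem_union_left _ (Finset.mem_union_left _ h)
      rcases Classical.em (G ∈ BadB) with h' | h'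
      · exact Finset.mem_union_left _ (Finset.mem_union_right _ h')
      · exact Finset.mem_union_right _ (hcon G h h')
    have hcard := Finset.card_le_card hsub
    rw [Finset.card_univ, hcardall] at hcard
    have hU : (BadA ∪ BadB ∪ BadC).card ≤ BadA.card + BadB.card + BadC.card :=
      le_trans (Finset.card_union_le _ _)
        (Nat.add_le_add_right (Finset.card_union_le _ _) _)
    have hPpos : 0 < 2 ^ ((k₁ + k₂) * n) := Nat.pow_pos (by norm_num)
    omega
  obtain ⟨G, hGA, hGB, hGC⟩ := hex
  set H₁ : Matrix (Fin k₁) (Fin n) (ZMod 2) := Matrix.of fun i j => G j (Sum.inl i) with hH₁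
  set H₂ : Matrix (Fin k₂) (Fin n) (ZMod 2) := Matrix.of fun i j => G j (Sum.inr i) with hH₂
  set H : Matrix (Fin k₁ ⊕ Fin k₂) (Fin n) (ZMod 2) := Matrix.fromRows H₁ H₂ with hH
  have hcol : ∀ j, (fun x => H x j) = G j := by
    intro j; funext x; cases x <;> rfl
  refine ⟨H₁, H₂, ?_, ?_, ?_⟩
  · -- full row rank
    rw [← hH]
    have hrankeq : Matrix.rank H = colSpanDim H Finset.univ := by
      unfold Matrix.rank colSpanDim
      rw [Matrix.range_mulVecLin, Finset.coe_univ]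
      exact congrArg (fun s => Module.finrank (ZMod 2) (Submodule.span (ZMod 2) s))
        (Set.image_univ (f := (Hᵀ : Fin n → (Fin k₁ ⊕ Fin k₂) → ZMod 2))).symm
    have hnotA : ¬ (colSpanDim H Finset.univ + 1 ≤ k₁ + k₂) := by
      intro hle
      obtain ⟨v, hv, hortho⟩ :=
        Stmt16.exists_indep_orthogonal H Finset.univ 1 (by rw [hcardκ]; exact hle)
      apply hGA
      rw [hBadA]
      refine Finset.mem_filter.mpr ⟨Finset.mem_univ _, v, hv, fun j hj i => ?_⟩
      simpa [LinearMap.id_coe, id_eq, hcol j] using hortho j hj i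
    have hub : Matrix.rank H ≤ k₁ + k₂ := by
      have h := Matrix.rank_le_card_height H
      rwa [hcardκ] at h
    rw [hrankeq] at hub ⊢
    omega
  · -- columns of H
    intro Γ hΓ
    rw [← hH]
    have hnot : ¬ (colSpanDim H Γ + t ≤ k₁ + k₂) := by
      intro hle
      obtain ⟨v, hv, hortho⟩ :=
        Stmt16.exists_indep_orthogonal H Γ t (by rw [hcardκ]; exact hle)
      apply hGB
      rw [hBadB]
      refine Finset.mem_filter.mpr ⟨Finset.mem_univ _, Γ, hΓ, ?_⟩
      refine Finset.mem_filter.mpr ⟨Finset.mem_univ _, v, hv, fun j hj i => ?_⟩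
      simpa [LinearMap.id_coe, id_eq, hcol j] using hortho j hj i
    have hge : (k₁ + k₂ : ℕ) + 1 ≤ colSpanDim H Γ + t := by omega
    have hgeR : ((k₁:ℝ) + k₂) + 1 ≤ (colSpanDim H Γ : ℝ) + t := by exact_mod_cast hge
    have h3ε : (0:ℝ) < 3/ε := by positivity
    linarith [hkR, htub, hgeR]
  · -- columns of H₁
    intro Γ hΓ
    have hnot : ¬ (colSpanDim H₁ Γ + t ≤ k₁) := by
      intro hle
      obtain ⟨v, hv, hortho⟩ :=
        Stmt16.exists_indep_orthogonal H₁ Γ t (by rw [Fintype.card_fin]; exact hle)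
      apply hGC
      rw [hBadC]
      refine Finset.mem_filter.mpr ⟨Finset.mem_univ _, Γ, hΓ, ?_⟩
      refine Finset.mem_filter.mpr ⟨Finset.mem_univ _, v, hv, fun j hj i => ?_⟩
      have h0 := hortho j hj i
      simpa [LinearMap.funLeft_apply, hH₁, Function.comp, dotProduct] using h0
    have hge : k₁ + 1 ≤ colSpanDim H₁ Γ + t := by omega
    have hgeR : (k₁:ℝ) + 1 ≤ (colSpanDim H₁ Γ : ℝ) + t := by exact_mod_cast hge
    linarith [hk₁, htub, hgeR]
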